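/- Let A be an abelian group and let n ≥ 1, k ≥ 0 be integers. A map f : ℤⁿ → A is a polynomial of degree at most k if and only if f lies in the additive subgroup of maps ℤⁿ → A generated by the maps x = (x₁,…,x_n) ↦ (∏_{i=1}^n binom(x_i, m_i)) • a, where a ∈ A and m₁,…,m_n are nonnegative integers with m₁ + ⋯ + m_n ≤ k, and binom(x, m) denotes the integer-valued binomial coefficient x(x−1)⋯(x−m+1)/m! of an integer argument x. -/

import Mathlib

open scoped BigOperators

/-- The difference operator `D_h`: `(D_h f)(x) = f(x+h) − f(x)`. -/
def discDeriv {G A : Type*} [Add G] [Sub A] (h : G) (f : G → A) : G → A :=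
  fun x => f (x + h) - f x

/-- `f` is a polynomial map of degree at most `k`: it is killed by any `k+1` consecutive
applications of difference operators. -/
def IsPolyDegLe {G A : Type*} [Add G] [Sub A] [Zero A] (k : ℕ) (f : G → A) : Prop :=
  ∀ hs : Fin (k + 1) → G, (List.ofFn hs).foldr discDeriv f = fun _ => (0 : A)

section Basic

variable {G A : Type*} [AddCommGroup G] [AddCommGroup A]

lemma discDeriv_add (h : G) (f g : G → A) :
    discDeriv h (f + g) = discDeriv h f + discDeriv h g := by
  funext x; simp [discDeriv]; abel

lemma discDeriv_zero (h : G) : discDeriv h (0 : G → A) = 0 := by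
  funext x; simp [discDeriv]

lemma discDeriv_neg (h : G) (f : G → A) : discDeriv h (-f) = -discDeriv h f := by
  funext x; simp [discDeriv]; abel

lemma discDeriv_sub (h : G) (f g : G → A) :
    discDeriv h (f - g) = discDeriv h f - discDeriv h g := by
  funext x; simp [discDeriv]; abel

/-- `discDeriv h` as an additive monoid hom. -/
def discDerivHom (h : G) : (G → A) →+ (G → A) where
  toFun := discDeriv h
  map_zero' := discDeriv_zero h
  map_add' := discDeriv_add h

@[simp] lemma discDerivHom_apply (h : G) (f : G → A) : discDerivHom h f = discDeriv h f := rfl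

lemma foldr_discDeriv_sub (l : List G) (f g : G → A) :
    l.foldr discDeriv (f - g) = l.foldr discDeriv f - l.foldr discDeriv g := by
  induction l with
  | nil => rfl
  | cons h t ih => simp [List.foldr_cons, ih, discDeriv_sub]

lemma isPolyDegLe_iff_list (k : ℕ) (f : G → A) :
    IsPolyDegLe k f ↔ ∀ l : List G, l.length = k + 1 → l.foldr discDeriv f = fun _ => 0 := by
  constructor
  · intro hp l hl
    have hofn : List.ofFn (fun i : Fin (k + 1) => l.get (Fin.cast hl.symm i)) = l := by
      apply List.ext_get (by simp [hl])
      intro i h1 h2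
      simp only [List.getElem_ofFn, List.get_eq_getElem, Fin.cast_mk]
    rw [← hofn]
    exact hp _
  · intro hp hs
    exact hp _ (by simp)

lemma IsPolyDegLe.sub {k : ℕ} {f g : G → A} (hf : IsPolyDegLe k f) (hg : IsPolyDegLe k g) :
    IsPolyDegLe k (f - g) := by
  intro hs
  rw [foldr_discDeriv_sub, hf hs, hg hs]
  funext x; simp

lemma IsPolyDegLe.discDeriv_poly {k : ℕ} {f : G → A} (hf : IsPolyDegLe (k + 1) f) (h : G) :
    IsPolyDegLe k (discDeriv h f) := by
  rw [isPolyDegLe_iff_list]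
  intro l hl
  have : l.foldr discDeriv (discDeriv h f) = (l ++ [h]).foldr discDeriv f := by
    rw [List.foldr_append]; rfl
  rw [this]
  exact (isPolyDegLe_iff_list (k + 1) f).mp hf _ (by simp [hl])

end Basic

section Main

variable {A : Type*} [AddCommGroup A] {n : ℕ}

/-- The generating set of the binomial span. -/
def gens (A : Type*) [AddCommGroup A] (n k : ℕ) : Set ((Fin n → ℤ) → A) :=
  {g : (Fin n → ℤ) → A | ∃ (a : A) (m : Fin n → ℕ), (∑ i, m i) ≤ k ∧
    g = fun x => (∏ i, Ring.choose (x i) (m i)) • a}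

/-- The binomial span subgroup. -/
def Tg (A : Type*) [AddCommGroup A] (n k : ℕ) : AddSubgroup ((Fin n → ℤ) → A) :=
  AddSubgroup.closure (gens A n k)

lemma Tg_mono {k k' : ℕ} (h : k ≤ k') : Tg A n k ≤ Tg A n k' :=
  AddSubgroup.closure_mono (fun g ⟨a, m, hm, hg⟩ => ⟨a, m, hm.trans h, hg⟩)

/-- A single generator. -/
def genf (m : Fin n → ℕ) (a : A) : (Fin n → ℤ) → A :=
  fun x => (∏ i, Ring.choose (x i) (m i)) • a

lemma genf_mem {m : Fin n → ℕ} {k : ℕ} (hm : (∑ i, m i) ≤ k) (a : A) :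
    genf m a ∈ Tg A n k :=
  AddSubgroup.subset_closure ⟨a, m, hm, rfl⟩

lemma prod_single_split (x : Fin n → ℤ) (c : Fin n → ℤ) (m : Fin n → ℕ) (i : Fin n)
    (hc : ∀ j, j ≠ i → c j = x j) :
    ∏ j, Ring.choose (c j) (m j) =
      Ring.choose (c i) (m i) * ∏ j ∈ Finset.univ.erase i, Ring.choose (x j) (m j) := by
  rw [← Finset.mul_prod_erase Finset.univ _ (Finset.mem_univ i)]
  congr 1
  exact Finset.prod_congr rfl fun j hj => by rw [hc j (Finset.ne_of_mem_erase hj)]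

lemma discDeriv_single_genf (i : Fin n) (m : Fin n → ℕ) (t : ℕ) (hm : m i = t + 1) (a : A) :
    discDeriv (Pi.single i 1) (genf m a) = genf (Function.update m i t) a := by
  funext x
  simp only [discDeriv, genf, ← sub_smul]
  congr 1
  rw [prod_single_split x (x + Pi.single i 1) m i
        (fun j hj => by simp [Pi.single_eq_of_ne hj]),
      prod_single_split x x m i (fun j _ => rfl),
      prod_single_split x x (Function.update m i t) i (fun j _ => rfl)]
  have h1 : (x + Pi.single i 1 : Fin n → ℤ) i = x i + 1 := by simp
  have h2 : ∀ j ∈ Finset.univ.erase i, Ring.choose (x j) (Function.update m i t j)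
      = Ring.choose (x j) (m j) := fun j hj => by
    rw [Function.update_of_ne (Finset.ne_of_mem_erase hj)]
  rw [Finset.prod_congr rfl h2, h1, hm, Ring.choose_succ_succ, Function.update_self]
  ring

lemma discDeriv_single_genf_zero (i : Fin n) (m : Fin n → ℕ) (hm : m i = 0) (a : A) :
    discDeriv (Pi.single i 1) (genf m a) = 0 := by
  funext x
  simp only [discDeriv, genf, ← sub_smul, Pi.zero_apply]
  rw [prod_single_split x (x + Pi.single i 1) m i
        (fun j hj => by simp [Pi.single_eq_of_ne hj]),
      prod_single_split x x m i (fun j _ => rfl), hm]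
  simp [Ring.choose_zero_right]

lemma Tg_zero_discDeriv (h : Fin n → ℤ) {f : (Fin n → ℤ) → A} (hf : f ∈ Tg A n 0) :
    discDeriv h f = 0 := by
  induction hf using AddSubgroup.closure_induction with
  | mem g hg =>
    obtain ⟨a, m, hm, rfl⟩ := hg
    have hm0 : ∀ i, m i = 0 := by
      intro i
      have := Finset.sum_eq_zero_iff.mp (Nat.le_zero.mp hm) i (Finset.mem_univ i)
      exact this
    have : ∀ (y : Fin n → ℤ), (∏ i, Ring.choose (y i) (m i)) = 1 := fun y =>
      Finset.prod_eq_one fun i _ => by rw [hm0 i, Ring.choose_zero_right]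
    funext x
    simp [discDeriv, this]
  | zero => exact discDeriv_zero h
  | add f g _ _ ihf ihg => rw [discDeriv_add, ihf, ihg]; simp
  | neg f _ ihf => rw [discDeriv_neg, ihf]; simp

/-- The key property of a direction `h`. -/
def Qp (h : Fin n → ℤ) : Prop :=
  ∀ (d : ℕ) (f : (Fin n → ℤ) → A), f ∈ Tg A n (d + 1) → discDeriv h f ∈ Tg A n d

lemma Qp_zero : Qp (A := A) (0 : Fin n → ℤ) := by
  intro d f _
  have : discDeriv (0 : Fin n → ℤ) f = 0 := by funext x; simp [discDeriv]
  rw [this]; exact zero_mem _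

lemma Qp_single (i : Fin n) : Qp (A := A) (Pi.single i 1) := by
  intro d f hf
  induction hf using AddSubgroup.closure_induction with
  | mem g hg =>
    obtain ⟨a, m, hm, rfl⟩ := hg
    rcases Nat.eq_zero_or_eq_succ_pred (m i) with h0 | hs
    · rw [show (fun x => (∏ j, Ring.choose (x j) (m j)) • a) = genf m a from rfl,
        discDeriv_single_genf_zero i m h0 a]
      exact zero_mem _
    · rw [show (fun x => (∏ j, Ring.choose (x j) (m j)) • a) = genf m a from rfl,
        discDeriv_single_genf i m (m i - 1) (by omega) a]
      apply genf_mem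
      have h1 : ∑ j, Function.update m i (m i - 1) j
          = (m i - 1) + ∑ j ∈ Finset.univ.erase i, m j := by
        rw [Finset.sum_update_of_mem (Finset.mem_univ i), Finset.sdiff_singleton_eq_erase]
      have h2 : ∑ j, m j = m i + ∑ j ∈ Finset.univ.erase i, m j :=
        (Finset.add_sum_erase Finset.univ m (Finset.mem_univ i)).symm
      omega
  | zero =>
    rw [discDeriv_zero]; exact zero_mem _
  | add f g _ _ ihf ihg => rw [discDeriv_add]; exact add_mem ihf ihg
  | neg f _ ihf => rw [discDeriv_neg]; exact neg_mem ihf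

lemma Qp_add {a b : Fin n → ℤ} (ha : Qp (A := A) a) (hb : Qp (A := A) b) : Qp (A := A) (a + b) := by
  intro d f hf
  have key : discDeriv (a + b) f
      = discDeriv a f + discDeriv b f + discDeriv a (discDeriv b f) := by
    funext x
    simp only [discDeriv, Pi.add_apply]
    rw [show x + (a + b) = x + b + a by abel]
    abel
  rw [key]
  have h1 : discDeriv a f ∈ Tg A n d := ha d f hf
  have h2 : discDeriv b f ∈ Tg A n d := hb d f hf
  have h3 : discDeriv a (discDeriv b f) ∈ Tg A n d := by
    cases d with
    | zero => rw [Tg_zero_discDeriv a h2]; exact zero_mem _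
    | succ e => exact Tg_mono (Nat.le_succ e) (ha e _ h2)
  exact add_mem (add_mem h1 h2) h3

lemma Qp_neg {a : Fin n → ℤ} (ha : Qp (A := A) a) : Qp (A := A) (-a) := by
  intro d
  induction d with
  | zero =>
    intro f hf
    have key : discDeriv (-a) f = -discDeriv a f - discDeriv (-a) (discDeriv a f) := by
      funext x
      simp only [discDeriv, Pi.neg_apply, Pi.sub_apply]
      rw [show x + -a + a = x by abel]
      abel
    rw [key]
    have h1 : discDeriv a f ∈ Tg A n 0 := ha 0 f hf
    rw [Tg_zero_discDeriv (-a) h1]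
    exact sub_mem (neg_mem h1) (zero_mem _)
  | succ e ih =>
    intro f hf
    have key : discDeriv (-a) f = -discDeriv a f - discDeriv (-a) (discDeriv a f) := by
      funext x
      simp only [discDeriv, Pi.neg_apply, Pi.sub_apply]
      rw [show x + -a + a = x by abel]
      abel
    rw [key]
    have h1 : discDeriv a f ∈ Tg A n (e + 1) := ha (e + 1) f hf
    have h2 : discDeriv (-a) (discDeriv a f) ∈ Tg A n e := ih _ h1
    exact sub_mem (neg_mem h1) (Tg_mono (Nat.le_succ e) h2)

end Main

section Main2

variable {A : Type*} [AddCommGroup A] {n : ℕ}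

lemma Qp_single_int (i : Fin n) (c : ℤ) : Qp (A := A) (Pi.single i c) := by
  induction c using Int.induction_on with
  | zero => rw [Pi.single_zero]; exact Qp_zero
  | succ c ih =>
    have : (Pi.single i ((c : ℤ) + 1) : Fin n → ℤ) = Pi.single i (c : ℤ) + Pi.single i 1 := by
      rw [← Pi.single_add]
    rw [this]; exact Qp_add ih (Qp_single i)
  | pred c ih =>
    have : (Pi.single i (-(c : ℤ) - 1) : Fin n → ℤ)
        = Pi.single i (-(c : ℤ)) + (-(Pi.single i 1 : Fin n → ℤ)) := by
      rw [← Pi.single_neg, ← Pi.single_add]; ring_nf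
    rw [this]; exact Qp_add ih (Qp_neg (Qp_single i))

lemma Qp_all (h : Fin n → ℤ) : Qp (A := A) h := by
  have key : ∀ s : Finset (Fin n), Qp (A := A) (∑ i ∈ s, Pi.single i (h i)) := by
    intro s
    induction s using Finset.induction with
    | empty => simpa using Qp_zero
    | insert _ _ hx ih =>
      rw [Finset.sum_insert hx]
      exact Qp_add (Qp_single_int _ _) ih
  have : h = ∑ i, Pi.single i (h i) := by
    funext j
    rw [Finset.sum_apply]
    simp [Pi.single_apply]
  rw [this]; exact key Finset.univ

lemma Tg_foldr_vanish : ∀ (d : ℕ) (f : (Fin n → ℤ) → A), f ∈ Tg A n d →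
    ∀ l : List (Fin n → ℤ), l.length = d + 1 → l.foldr discDeriv f = fun _ => 0 := by
  intro d
  induction d with
  | zero =>
    intro f hf l hl
    rcases l with _ | ⟨h, l'⟩
    · simp at hl
    · have : l' = [] := by simpa using hl
      subst this
      show discDeriv h f = fun _ => 0
      rw [Tg_zero_discDeriv h hf]; rfl
  | succ d ih =>
    intro f hf l hl
    rcases List.eq_nil_or_concat l with rfl | ⟨l', h, rfl⟩
    · simp at hl
    · have hlen : l'.length = d + 1 := by
        rw [List.concat_eq_append, List.length_append] at hl
        simpa using hl
      have hfold : (l'.concat h).foldr discDeriv f = l'.foldr discDeriv (discDeriv h f) := by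
        rw [List.concat_eq_append, List.foldr_append]
        rfl
      rw [hfold]
      have hmem : discDeriv h f ∈ Tg A n d := Qp_all h d f hf
      exact ih (discDeriv h f) hmem l' hlen

/-- (←) direction. -/
lemma Tg_isPoly {k : ℕ} {f : (Fin n → ℤ) → A} (hf : f ∈ Tg A n k) : IsPolyDegLe k f := by
  rw [isPolyDegLe_iff_list]
  exact fun l hl => Tg_foldr_vanish k f hf l hl

/-- Signed sum `I u x = ∑_{0 ≤ t < x} u t` (with sign convention for negative `x`). -/
noncomputable def sInt (u : ℤ → A) (x : ℤ) : A :=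
  (∑ t ∈ Finset.Ico (0 : ℤ) x, u t) - ∑ t ∈ Finset.Ico x (0 : ℤ), u t

lemma sInt_zero (u : ℤ → A) : sInt u 0 = 0 := by simp [sInt]

lemma sInt_succ (u : ℤ → A) (x : ℤ) : sInt u (x + 1) = sInt u x + u x := by
  rcases le_or_gt 0 x with hx | hx
  · have h1 : Finset.Ico x (0 : ℤ) = ∅ := Finset.Ico_eq_empty (by omega)
    have h2 : Finset.Ico (x + 1) (0 : ℤ) = ∅ := Finset.Ico_eq_empty (by omega)
    have h3 : Finset.Ico (0 : ℤ) (x + 1) = insert x (Finset.Ico 0 x) := by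
      ext t; simp only [Finset.mem_Ico, Finset.mem_insert]; omega
    rw [sInt, sInt, h1, h2, h3, Finset.sum_insert (by simp)]
    simp only [Finset.sum_empty]; abel
  · have h1 : Finset.Ico (0 : ℤ) x = ∅ := Finset.Ico_eq_empty (by omega)
    have h2 : Finset.Ico (0 : ℤ) (x + 1) = ∅ := Finset.Ico_eq_empty (by omega)
    have h3 : Finset.Ico x (0 : ℤ) = insert x (Finset.Ico (x + 1) 0) := by
      ext t; simp only [Finset.mem_Ico, Finset.mem_insert]; omega
    rw [sInt, sInt, h1, h2, h3, Finset.sum_insert (by simp)]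
    simp only [Finset.sum_empty]; abel

lemma sInt_add (u v : ℤ → A) (x : ℤ) :
    sInt (fun t => u t + v t) x = sInt u x + sInt v x := by
  simp only [sInt, Finset.sum_add_distrib]; abel

lemma sInt_smul (u : ℤ → ℤ) (a : A) (x : ℤ) :
    sInt (fun t => u t • a) x = (sInt u x) • a := by
  simp only [sInt, sub_smul, Finset.sum_smul]

lemma sInt_mul (u : ℤ → ℤ) (C : ℤ) (x : ℤ) :
    sInt (fun t => u t * C) x = (sInt u x) * C := by
  simp only [sInt, sub_mul, Finset.sum_mul]

lemma sInt_choose (t : ℕ) (x : ℤ) :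
    sInt (fun s => Ring.choose s t) x = Ring.choose x (t + 1) := by
  induction x using Int.induction_on with
  | zero => rw [sInt_zero, Ring.choose_zero_succ]
  | succ c ih =>
    rw [sInt_succ, ih, Ring.choose_succ_succ]
    abel
  | pred c ih =>
    have h1 := sInt_succ (fun s => Ring.choose s t) (-(c : ℤ) - 1)
    rw [show (-(c : ℤ) - 1) + 1 = -(c : ℤ) by ring, ih] at h1
    have h2 := Ring.choose_succ_succ (-(c : ℤ) - 1) t
    rw [show (-(c : ℤ) - 1) + 1 = -(c : ℤ) by ring] at h2
    have goal1 : sInt (fun s => Ring.choose s t) (-(c : ℤ) - 1)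
        = Ring.choose (-(c : ℤ)) (t + 1) - Ring.choose (-(c : ℤ) - 1) t :=
      eq_sub_of_add_eq h1.symm
    rw [goal1, h2]; ring

end Main2

section Main3

variable {A : Type*} [AddCommGroup A] {n : ℕ}

/-- Discrete antiderivative in direction `i`, vanishing on `x i = 0`. -/
noncomputable def anti (i : Fin n) (g : (Fin n → ℤ) → A) : (Fin n → ℤ) → A :=
  fun x => sInt (fun t => g (Function.update x i t)) (x i)

lemma update_add_single (x : Fin n → ℤ) (i : Fin n) (t : ℤ) :
    Function.update (x + Pi.single i 1) i t = Function.update x i t := by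
  funext j
  rcases eq_or_ne j i with rfl | hj
  · simp
  · simp [Function.update_of_ne hj, Pi.single_eq_of_ne hj]

lemma discDeriv_anti (i : Fin n) (g : (Fin n → ℤ) → A) :
    discDeriv (Pi.single i 1) (anti i g) = g := by
  funext x
  simp only [discDeriv, anti]
  have h1 : ∀ t, Function.update (x + Pi.single i 1) i t = Function.update x i t :=
    update_add_single x i
  have h2 : (x + Pi.single i 1 : Fin n → ℤ) i = x i + 1 := by simp
  simp only [h1, h2, sInt_succ]
  rw [Function.update_eq_self]
  abel

lemma anti_add (i : Fin n) (g g' : (Fin n → ℤ) → A) :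
    anti i (g + g') = anti i g + anti i g' := by
  funext x
  simp only [anti, Pi.add_apply]
  rw [← sInt_add]

lemma anti_genf (i : Fin n) (m : Fin n → ℕ) (a : A) :
    anti i (genf m a) = genf (Function.update m i (m i + 1)) a := by
  funext x
  simp only [anti, genf]
  have hprod : ∀ t : ℤ, ∏ j, Ring.choose (Function.update x i t j) (m j)
      = Ring.choose t (m i) * ∏ j ∈ Finset.univ.erase i, Ring.choose (x j) (m j) := by
    intro t
    rw [prod_single_split x (Function.update x i t) m i
      (fun j hj => Function.update_of_ne hj _ _), Function.update_self]
  simp only [hprod]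
  have herase : ∏ j ∈ Finset.univ.erase i, Ring.choose (x j) (Function.update m i (m i + 1) j)
      = ∏ j ∈ Finset.univ.erase i, Ring.choose (x j) (m j) :=
    Finset.prod_congr rfl (fun j hj => by
      rw [Function.update_of_ne (Finset.ne_of_mem_erase hj)])
  rw [sInt_smul, sInt_mul, sInt_choose,
    prod_single_split x x (Function.update m i (m i + 1)) i (fun j _ => rfl),
    Function.update_self, herase]

end Main3

section Main4

variable {A : Type*} [AddCommGroup A] {n : ℕ}

lemma sInt_neg (u : ℤ → A) (x : ℤ) : sInt (fun t => -u t) x = -sInt u x := by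
  simp only [sInt, Finset.sum_neg_distrib]; abel

lemma anti_neg (i : Fin n) (g : (Fin n → ℤ) → A) : anti i (-g) = -anti i g := by
  funext x
  simp only [anti, Pi.neg_apply]
  rw [← sInt_neg]

lemma anti_zero (i : Fin n) : anti i (0 : (Fin n → ℤ) → A) = 0 := by
  funext x; simp [anti, sInt]

lemma anti_mem {k : ℕ} (i : Fin n) {g : (Fin n → ℤ) → A} (hg : g ∈ Tg A n k) :
    anti i g ∈ Tg A n (k + 1) := by
  induction hg using AddSubgroup.closure_induction with
  | mem g hgen =>
    obtain ⟨a, m, hm, rfl⟩ := hgen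
    rw [show (fun x => (∏ j, Ring.choose (x j) (m j)) • a) = genf m a from rfl, anti_genf]
    apply genf_mem
    have h1 : ∑ j, Function.update m i (m i + 1) j
        = (m i + 1) + ∑ j ∈ Finset.univ.erase i, m j := by
      rw [Finset.sum_update_of_mem (Finset.mem_univ i), Finset.sdiff_singleton_eq_erase]
    have h2 : ∑ j, m j = m i + ∑ j ∈ Finset.univ.erase i, m j :=
      (Finset.add_sum_erase Finset.univ m (Finset.mem_univ i)).symm
    omega
  | zero => rw [anti_zero]; exact zero_mem _
  | add g g' _ _ ihg ihg' => rw [anti_add]; exact add_mem ihg ihg'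
  | neg g _ ihg => rw [anti_neg]; exact neg_mem ihg

/-- `f` depends only on the coordinates in `s`. -/
def DependsOn' (s : Finset (Fin n)) (f : (Fin n → ℤ) → A) : Prop :=
  ∀ x y : Fin n → ℤ, (∀ j ∈ s, x j = y j) → f x = f y

lemma anti_depends {i : Fin n} {s : Finset (Fin n)} {g : (Fin n → ℤ) → A}
    (hg : DependsOn' (insert i s) g) : DependsOn' (insert i s) (anti i g) := by
  intro x y hxy
  have hxi : x i = y i := hxy i (Finset.mem_insert_self i s)
  have hfun : (fun t => g (Function.update x i t)) = fun t => g (Function.update y i t) := by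
    funext t
    apply hg
    intro j hj
    rcases eq_or_ne j i with rfl | hne
    · simp
    · rw [Function.update_of_ne hne, Function.update_of_ne hne]
      exact hxy j hj
  simp only [anti, hfun, hxi]

lemma invar (i : Fin n) (φ : (Fin n → ℤ) → A)
    (hφ : discDeriv (Pi.single i 1) φ = 0) (x : Fin n → ℤ) :
    φ x = φ (Function.update x i 0) := by
  have step : ∀ y : Fin n → ℤ, φ (y + Pi.single i 1) = φ y := by
    intro y
    have := congrFun hφ y
    simpa [discDeriv, sub_eq_zero] using this
  have all : ∀ (c : ℤ) (y : Fin n → ℤ), φ (y + Pi.single i c) = φ y := by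
    intro c
    induction c using Int.induction_on with
    | zero => intro y; simp
    | succ c ih =>
      intro y
      have harg : y + Pi.single i ((c : ℤ) + 1) = (y + Pi.single i (c : ℤ)) + Pi.single i 1 := by
        rw [Pi.single_add]; abel
      rw [harg, step, ih]
    | pred c ih =>
      intro y
      have harg : y + Pi.single i (-(c : ℤ) - 1) + Pi.single i 1
          = y + Pi.single i (-(c : ℤ)) := by
        rw [add_assoc, ← Pi.single_add]; norm_num
      have := step (y + Pi.single i (-(c : ℤ) - 1))
      rw [harg] at this
      rw [← this, ih]
  have hupd : Function.update x i 0 = x + Pi.single i (-(x i)) := by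
    funext j
    rcases eq_or_ne j i with rfl | hne
    · simp
    · simp [Function.update_of_ne hne, Pi.single_eq_of_ne hne]
  rw [hupd, all]

lemma update_zero_add (i : Fin n) (x y : Fin n → ℤ) :
    Function.update (x + y) i 0 = Function.update x i 0 + Function.update y i 0 := by
  funext j
  rcases eq_or_ne j i with rfl | hne
  · simp
  · simp [Function.update_of_ne hne]

lemma poly_comp_update (i : Fin n) {k : ℕ} {f : (Fin n → ℤ) → A} (hf : IsPolyDegLe k f) :
    IsPolyDegLe k (fun x => f (Function.update x i 0)) := by
  set L : (Fin n → ℤ) → (Fin n → ℤ) := fun x => Function.update x i 0 with hL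
  have foldc : ∀ l : List (Fin n → ℤ),
      l.foldr discDeriv (fun x => f (L x)) = fun x => ((l.map L).foldr discDeriv f) (L x) := by
    intro l
    induction l with
    | nil => rfl
    | cons h t ih =>
      simp only [List.foldr_cons, List.map_cons]
      rw [ih]
      funext x
      show (t.map L).foldr discDeriv f (L (x + h)) - (t.map L).foldr discDeriv f (L x)
          = (t.map L).foldr discDeriv f (L x + L h) - (t.map L).foldr discDeriv f (L x)
      rw [show L (x + h) = L x + L h from update_zero_add i x h]
  intro hs
  have h1 := hf (L ∘ hs)
  rw [foldc]
  rw [List.map_ofFn, h1]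

lemma poly_mem : ∀ (k : ℕ) (f : (Fin n → ℤ) → A), IsPolyDegLe k f → f ∈ Tg A n k := by
  intro k
  induction k with
  | zero =>
    intro f hf
    have hconst : ∀ x, f x = f 0 := by
      intro x
      have := congrFun (hf fun _ => x) 0
      simpa [List.ofFn_succ, discDeriv, sub_eq_zero] using this
    have : f = genf (0 : Fin n → ℕ) (f 0) := by
      funext x
      simp [genf, Ring.choose_zero_right, hconst x]
    rw [this]
    exact genf_mem (by simp) _
  | succ k IHk =>
    have inner : ∀ s : Finset (Fin n), ∀ f : (Fin n → ℤ) → A,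
        IsPolyDegLe (k + 1) f → DependsOn' s f → f ∈ Tg A n (k + 1) := by
      intro s
      induction s using Finset.induction with
      | empty =>
        intro f hf hdep
        have hconst : ∀ x, f x = f 0 := fun x => hdep x 0 (by simp)
        have : f = genf (0 : Fin n → ℕ) (f 0) := by
          funext x
          simp [genf, Ring.choose_zero_right, hconst x]
        rw [this]
        exact genf_mem (by simp) _
      | @insert i s hi ih =>
        intro f hf hdep
        set g := discDeriv (Pi.single i 1) f with hgdef
        have hg : IsPolyDegLe k g := hf.discDeriv_poly _
        have hgT : g ∈ Tg A n k := IHk _ hg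
        have hAg : anti i g ∈ Tg A n (k + 1) := anti_mem i hgT
        set φ := f - anti i g with hφdef
        have hφD : discDeriv (Pi.single i 1) φ = 0 := by
          rw [hφdef, discDeriv_sub, discDeriv_anti, ← hgdef, sub_self]
        have hφpoly : IsPolyDegLe (k + 1) φ := hf.sub (Tg_isPoly hAg)
        have hgdep : DependsOn' (insert i s) g := by
          intro x y hxy
          have hshift : ∀ j ∈ insert i s, (x + Pi.single i 1 : Fin n → ℤ) j
              = (y + Pi.single i 1 : Fin n → ℤ) j := by
            intro j hj
            simp only [Pi.add_apply]
            rw [hxy j hj]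
          show f (x + Pi.single i 1) - f x = f (y + Pi.single i 1) - f y
          rw [hdep _ _ hshift, hdep x y hxy]
        have hAdep : DependsOn' (insert i s) (anti i g) := anti_depends hgdep
        have hφdep : DependsOn' s φ := by
          intro x y hxy
          rw [invar i φ hφD x, invar i φ hφD y]
          have hagree : ∀ j ∈ insert i s, Function.update x i 0 j = Function.update y i 0 j := by
            intro j hj
            rcases eq_or_ne j i with rfl | hne
            · simp
            · rw [Function.update_of_ne hne, Function.update_of_ne hne]
              exact hxy j ((Finset.mem_insert.mp hj).resolve_left hne)
          show f _ - anti i g _ = f _ - anti i g _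
          rw [hdep _ _ hagree, hAdep _ _ hagree]
        have hφT : φ ∈ Tg A n (k + 1) := ih φ hφpoly hφdep
        have hsplit : f = φ + anti i g := by rw [hφdef]; abel
        rw [hsplit]
        exact add_mem hφT hAg
    exact fun f hf => inner Finset.univ f hf
      (fun x y h => by
        have hxy : x = y := funext fun j => h j (Finset.mem_univ j)
        rw [hxy])

end Main4

theorem polyDegLe_iff_mem_binomial_span
    {A : Type*} [AddCommGroup A] (n : ℕ) (hn : 1 ≤ n) (k : ℕ)
    (f : (Fin n → ℤ) → A) :
    IsPolyDegLe k f ↔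
      f ∈ AddSubgroup.closure
        {g : (Fin n → ℤ) → A | ∃ (a : A) (m : Fin n → ℕ), (∑ i, m i) ≤ k ∧
          g = fun x => (∏ i, Ring.choose (x i) (m i)) • a} := by
  constructor
  · exact fun h => poly_mem k f h
  · exact fun h => Tg_isPoly h
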